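/- Let (L, ⊔) be a finite join-semilattice with a least element. Then L has separated equalizers if and only if L can be represented as an antimatroid, i.e., there exist a finite set X, a learning space 𝓕 on X, and a bijection φ : L → 𝓕 such that φ(x ⊔ y) = φ(x) ∪ φ(y) for all x, y ∈ L. -/

import Mathlib

/-- A join-semilattice has separated equalizers if, for every equalizing pair `x ≤ y`
(a pair for which there exist `a, b` with `x ⊔ a ≠ x ⊔ b`, `y ⊔ a = y ⊔ b`,
`x ⊔ a ≠ y ⊔ a`, and `x ⊔ b ≠ y ⊔ b`), there exists `z` with `x < z < y`. -/
def SeparatedEqualizers (L : Type*) [SemilatticeSup L] : Prop :=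
  ∀ x y : L, x ≤ y →
    (∃ a b : L, x ⊔ a ≠ x ⊔ b ∧ y ⊔ a = y ⊔ b ∧ x ⊔ a ≠ y ⊔ a ∧ x ⊔ b ≠ y ⊔ b) →
    ∃ z : L, x < z ∧ z < y

/-- A learning space (antimatroid) on the finite type `X`: a family of subsets of `X`
containing `∅`, covering all of `X`, accessible, and closed under unions. -/
def IsLearningSpaceOn (X : Type*) (F : Set (Set X)) : Prop :=
  ∅ ∈ F ∧
  ⋃₀ F = Set.univ ∧
  (∀ S ∈ F, S.Nonempty → ∃ x ∈ S, S \ {x} ∈ F) ∧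
  (∀ S ∈ F, ∀ T ∈ F, S ∪ T ∈ F)

set_option linter.unusedSectionVars false

section Stmt19Aux

variable {L : Type*} [Lattice L] [OrderBot L] [OrderTop L] [Fintype L]

/-- In a finite order, above any strict lower bound there is a lower cover. -/
lemma stmt19_exists_le_covby {x y : L} (h : x < y) : ∃ z, x ≤ z ∧ z ⋖ y := by
  classical
  obtain ⟨m, hm, hmax⟩ : ∃ m ∈ Finset.univ.filter (fun z => x ≤ z ∧ z < y),
      ∀ c ∈ Finset.univ.filter (fun z => x ≤ z ∧ z < y), ¬ m < c := by
    obtain ⟨m, hm⟩ := Finset.exists_maximal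
      (s := Finset.univ.filter fun z => x ≤ z ∧ z < y) ⟨x, by simp [h]⟩
    exact ⟨m, hm.1, fun c hc hlt => hlt.not_ge (hm.2 hc hlt.le)⟩
  simp only [Finset.mem_filter, Finset.mem_univ, true_and] at hm
  refine ⟨m, hm.1, hm.2, fun c hc1 hc2 => ?_⟩
  exact hmax c (by simp [hm.1.trans hc1.le, hc2]) hc1

/-- Meet-irreducible elements (other than the top). -/
def Stmt19Mi (m : L) : Prop := m ≠ ⊤ ∧ ∀ a b : L, m < a → m < b → m < a ⊓ b

/-- Separation by meet-irreducibles. -/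
lemma stmt19_mi_sep {x z : L} (h : ¬ x ≤ z) : ∃ m : L, Stmt19Mi m ∧ z ≤ m ∧ ¬ x ≤ m := by
  classical
  obtain ⟨m, hm, hmax⟩ : ∃ m ∈ Finset.univ.filter (fun w => z ≤ w ∧ ¬ x ≤ w),
      ∀ c ∈ Finset.univ.filter (fun w => z ≤ w ∧ ¬ x ≤ w), ¬ m < c := by
    obtain ⟨m, hm⟩ := Finset.exists_maximal
      (s := Finset.univ.filter fun w => z ≤ w ∧ ¬ x ≤ w) ⟨z, by simp [h]⟩
    exact ⟨m, hm.1, fun c hc hlt => hlt.not_ge (hm.2 hc hlt.le)⟩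
  simp only [Finset.mem_filter, Finset.mem_univ, true_and] at hm
  obtain ⟨hzm, hxm⟩ := hm
  refine ⟨m, ⟨fun e => hxm (e ▸ le_top), fun a b ha hb => ?_⟩, hzm, hxm⟩
  have hxa : x ≤ a := by
    by_contra hxa
    exact hmax a (by simp [hzm.trans ha.le, hxa]) ha
  have hxb : x ≤ b := by
    by_contra hxb
    exact hmax b (by simp [hzm.trans hb.le, hxb]) hb
  exact lt_of_le_of_ne (le_inf ha.le hb.le) (fun e => hxm (e ▸ le_inf hxa hxb))

variable (hSE : SeparatedEqualizers L)
include hSE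

/-- SE: the map `a ↦ u ⊔ a` is injective on the fiber of a covering pair `v ⋖ u`. -/
lemma stmt19_seInj {v u a b : L} (hvu : v ⋖ u) (hva : v ≤ a) (hua : ¬ u ≤ a)
    (hvb : v ≤ b) (hub : ¬ u ≤ b) (hj : u ⊔ a = u ⊔ b) : a = b := by
  by_contra hne
  have h1 : v ⊔ a ≠ v ⊔ b := by
    rw [sup_eq_right.2 hva, sup_eq_right.2 hvb]; exact hne
  have h3 : v ⊔ a ≠ u ⊔ a := by
    rw [sup_eq_right.2 hva]; exact fun e => hua (le_sup_left.trans e.ge)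
  have h4 : v ⊔ b ≠ u ⊔ b := by
    rw [sup_eq_right.2 hvb]; exact fun e => hub (le_sup_left.trans e.ge)
  obtain ⟨z, hz1, hz2⟩ := hSE v u hvu.le ⟨a, b, h1, hj, h3, h4⟩
  exact hvu.2 hz1 hz2

/-- SE implies a semimodularity-type property: elements in the fiber of `v ⋖ u`
are covered by their join with `u`. -/
lemma stmt19_covbySup {v u x : L} (hvu : v ⋖ u) (hvx : v ≤ x) (hux : ¬ u ≤ x) :
    x ⋖ x ⊔ u := by
  have hlt : x < x ⊔ u := lt_of_le_of_ne le_sup_left (fun e => hux (le_sup_right.trans e.ge))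
  refine ⟨hlt, fun c hxc hcu => ?_⟩
  obtain ⟨z, hcz, hzcov⟩ := stmt19_exists_le_covby hcu
  have hxz : x < z := hxc.trans_le hcz
  have huz : ¬ u ≤ z := fun h => (hzcov.lt.not_ge (sup_le hxz.le h))
  have hzu : z ⊔ u = x ⊔ u := by
    have h1 : z < z ⊔ u := lt_of_le_of_ne le_sup_left (fun e => huz (le_sup_right.trans e.ge))
    have h2 : z ⊔ u ≤ x ⊔ u := sup_le hzcov.lt.le le_sup_right
    by_contra hne
    exact hzcov.2 h1 (lt_of_le_of_ne h2 hne)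
  exact hxz.ne (stmt19_seInj hSE hvu hvx hux (hvx.trans hxz.le) huz
    (by rw [sup_comm u x, sup_comm u z, hzu]))

/-- SE implies fibers of covering pairs are closed under joins. -/
lemma stmt19_sdstar {v u : L} (hvu : v ⋖ u) :
    ∀ a, v ≤ a → ¬ u ≤ a → ∀ b, v ≤ b → ¬ u ≤ b → ¬ u ≤ a ⊔ b := by
  intro a
  induction a using WellFoundedLT.induction with
  | _ a iha =>
  intro hva hua b
  induction b using WellFoundedLT.induction with
  | _ b ihb =>
  intro hvb hub hu
  -- hu : u ≤ a ⊔ b, derive False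
  have hvai : v < a := lt_of_le_of_ne hva (by
    rintro rfl
    exact hub (by rwa [sup_eq_right.2 hvb] at hu))
  have hvbi : v < b := lt_of_le_of_ne hvb (by
    rintro rfl
    exact hua (by rwa [sup_eq_left.2 hva] at hu))
  obtain ⟨a₀, hva₀, ha₀a⟩ := stmt19_exists_le_covby hvai
  obtain ⟨b₀, hvb₀, hb₀b⟩ := stmt19_exists_le_covby hvbi
  have hua₀ : ¬ u ≤ a₀ := fun h => hua (h.trans ha₀a.le)
  have hub₀ : ¬ u ≤ b₀ := fun h => hub (h.trans hb₀b.le)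
  have ht : ¬ u ≤ a₀ ⊔ b := iha a₀ ha₀a.lt hva₀ hua₀ b hvb hub
  have ht' : ¬ u ≤ a ⊔ b₀ := ihb b₀ hb₀b.lt hvb₀ hub₀
  have hat : ¬ a ≤ a₀ ⊔ b := fun h => ht (hu.trans (sup_le h le_sup_right))
  -- absorption identities
  have e1 : a ⊔ (a₀ ⊔ b) = a ⊔ b :=
    le_antisymm (sup_le le_sup_left (sup_le (ha₀a.le.trans le_sup_left) le_sup_right))
      (sup_le le_sup_left (le_sup_right.trans le_sup_right))
  have e2 : b ⊔ (a ⊔ b₀) = a ⊔ b :=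
    le_antisymm (sup_le le_sup_right (sup_le le_sup_left (hb₀b.le.trans le_sup_right)))
      (sup_le (le_sup_left.trans le_sup_right) le_sup_left)
  by_cases hts : (a₀ ⊔ b) ⊔ u = a ⊔ b
  · by_cases hts' : (a ⊔ b₀) ⊔ u = a ⊔ b
    · -- both joins equal a ⊔ b; fiber injectivity forces a₀ ⊔ b = a ⊔ b₀
      have heq : a₀ ⊔ b = a ⊔ b₀ :=
        stmt19_seInj hSE hvu (hva₀.trans le_sup_left) ht (hva.trans le_sup_left) ht'
          (by rw [sup_comm u (a₀ ⊔ b), sup_comm u (a ⊔ b₀), hts, hts'])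
      exact hat (le_sup_left.trans heq.symm.le)
    · -- equalizing pair at the cover (b₀, b) with witnesses a⊔b₀ and (a⊔b₀)⊔u
      have k2 : b ⊔ (a ⊔ b₀) = b ⊔ ((a ⊔ b₀) ⊔ u) := by
        rw [← sup_assoc b (a ⊔ b₀) u, e2, sup_eq_left.2 hu]
      have c1 : b₀ ⊔ (a ⊔ b₀) ≠ b₀ ⊔ ((a ⊔ b₀) ⊔ u) := by
        rw [sup_eq_right.2 (le_sup_right : b₀ ≤ a ⊔ b₀),
          sup_eq_right.2 ((le_sup_right : b₀ ≤ a ⊔ b₀).trans le_sup_left)]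
        exact fun e => ht' (le_sup_right.trans e.ge)
      have c3 : b₀ ⊔ (a ⊔ b₀) ≠ b ⊔ (a ⊔ b₀) := by
        rw [sup_eq_right.2 (le_sup_right : b₀ ≤ a ⊔ b₀), e2]
        exact fun e => ht' (hu.trans e.ge)
      have c4 : b₀ ⊔ ((a ⊔ b₀) ⊔ u) ≠ b ⊔ ((a ⊔ b₀) ⊔ u) := by
        rw [sup_eq_right.2 ((le_sup_right : b₀ ≤ a ⊔ b₀).trans le_sup_left), ← k2, e2]
        exact fun e => hts' e
      obtain ⟨z, hz1, hz2⟩ := hSE b₀ b hb₀b.le ⟨a ⊔ b₀, (a ⊔ b₀) ⊔ u, c1, k2, c3, c4⟩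
      exact hb₀b.2 hz1 hz2
  · -- equalizing pair at the cover (a₀, a) with witnesses a₀⊔b and (a₀⊔b)⊔u
    have k2 : a ⊔ (a₀ ⊔ b) = a ⊔ ((a₀ ⊔ b) ⊔ u) := by
      rw [← sup_assoc a (a₀ ⊔ b) u, e1, sup_eq_left.2 hu]
    have c1 : a₀ ⊔ (a₀ ⊔ b) ≠ a₀ ⊔ ((a₀ ⊔ b) ⊔ u) := by
      rw [sup_eq_right.2 (le_sup_left : a₀ ≤ a₀ ⊔ b),
        sup_eq_right.2 ((le_sup_left : a₀ ≤ a₀ ⊔ b).trans le_sup_left)]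
      exact fun e => ht (le_sup_right.trans e.ge)
    have c3 : a₀ ⊔ (a₀ ⊔ b) ≠ a ⊔ (a₀ ⊔ b) := by
      rw [sup_eq_right.2 (le_sup_left : a₀ ≤ a₀ ⊔ b), e1]
      exact fun e => ht (hu.trans e.ge)
    have c4 : a₀ ⊔ ((a₀ ⊔ b) ⊔ u) ≠ a ⊔ ((a₀ ⊔ b) ⊔ u) := by
      rw [sup_eq_right.2 ((le_sup_left : a₀ ≤ a₀ ⊔ b).trans le_sup_left), ← k2, e1]
      exact fun e => hts e
    obtain ⟨z, hz1, hz2⟩ := hSE a₀ a ha₀a.le ⟨a₀ ⊔ b, (a₀ ⊔ b) ⊔ u, c1, k2, c3, c4⟩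
    exact ha₀a.2 hz1 hz2

/-- Every non-bottom element has a lower cover `v` together with a unique
meet-irreducible above `v` but not above `u`. -/
lemma stmt19_exists_cover_mi {u : L} (hu : u ≠ ⊥) :
    ∃ v M : L, v ⋖ u ∧ Stmt19Mi M ∧ v ≤ M ∧ ¬ u ≤ M ∧
      (∀ n : L, Stmt19Mi n → v ≤ n → ¬ u ≤ n → n = M) := by
  classical
  obtain ⟨v, -, hvu⟩ := stmt19_exists_le_covby (bot_lt_iff_ne_bot.2 hu)
  have hvmem : v ∈ Finset.univ.filter (fun x : L => v ≤ x ∧ ¬ u ≤ x) := by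
    simp [hvu.lt.not_ge]
  set Fs := Finset.univ.filter (fun x : L => v ≤ x ∧ ¬ u ≤ x) with hFs
  set M := Fs.sup' ⟨v, hvmem⟩ id with hM
  have hMf : v ≤ M ∧ ¬ u ≤ M := by
    refine Finset.sup'_induction (p := fun x : L => v ≤ x ∧ ¬ u ≤ x) ⟨v, hvmem⟩ id
      (fun x hx y hy =>
        ⟨hx.1.trans le_sup_left, stmt19_sdstar hSE hvu x hx.1 hx.2 y hy.1 hy.2⟩)
      (fun b hb => ?_)
    simpa [hFs] using hb
  have hmax : ∀ n : L, v ≤ n → ¬ u ≤ n → n ≤ M := fun n h1 h2 =>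
    Finset.le_sup' id (by simp [hFs, h1, h2])
  have hMlt : M < M ⊔ u :=
    lt_of_le_of_ne le_sup_left (fun e => hMf.2 (le_sup_right.trans e.ge))
  have key : ∀ y : L, M < y → u ≤ y := by
    intro y hy
    by_contra h
    exact hy.not_ge (hmax y (hMf.1.trans hy.le) h)
  have hmi : Stmt19Mi M := by
    refine ⟨ne_top_of_lt hMlt, fun a b ha hb => ?_⟩
    refine lt_of_le_of_ne (le_inf ha.le hb.le) (fun e => hMf.2 ?_)
    exact e ▸ le_inf (key a ha) (key b hb)
  refine ⟨v, M, hvu, hmi, hMf.1, hMf.2, fun n hn h1 h2 => ?_⟩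
  by_contra hne
  have hnM : n < M := lt_of_le_of_ne (hmax n h1 h2) hne
  have hcov : n ⋖ n ⊔ u := stmt19_covbySup hSE hvu h1 h2
  have h3 : n < M ⊓ (n ⊔ u) := hn.2 M (n ⊔ u) hnM hcov.lt
  have h4 : M ⊓ (n ⊔ u) = n ⊔ u := by
    by_contra hne2
    exact hcov.2 h3 (lt_of_le_of_ne inf_le_right hne2)
  exact hMf.2 (le_sup_right.trans (h4 ▸ inf_le_left : n ⊔ u ≤ M))

end Stmt19Aux

/-- Augmentation property of learning spaces. -/
lemma stmt19_aug {X : Type} [Fintype X] {F : Set (Set X)} (hF : IsLearningSpaceOn X F) :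
    ∀ (n : ℕ) (T : Set X), T ∈ F → T.ncard ≤ n → ∀ S ∈ F, ¬ T ⊆ S →
      ∃ t ∈ T, t ∉ S ∧ insert t S ∈ F := by
  intro n
  induction n with
  | zero =>
    intro T hT hc S hS hTS
    obtain ⟨t, ht, hts⟩ := Set.not_subset.1 hTS
    rw [Nat.le_zero, Set.ncard_eq_zero (Set.toFinite T)] at hc
    exact absurd (hc ▸ ht) (Set.notMem_empty t)
  | succ n ih =>
    intro T hT hc S hS hTS
    obtain ⟨t0, ht0, hts0⟩ := Set.not_subset.1 hTS
    obtain ⟨x, hx, hxF⟩ := hF.2.2.1 T hT ⟨t0, ht0⟩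
    by_cases hsub : T \ {x} ⊆ S
    · have hxS : x ∉ S := by
        intro h
        refine hTS fun y hy => ?_
        by_cases hyx : y = x
        · exact hyx ▸ h
        · exact hsub ⟨hy, hyx⟩
      refine ⟨x, hx, hxS, ?_⟩
      have hm : S ∪ T ∈ F := hF.2.2.2 S hS T hT
      have he : S ∪ T = insert x S := by
        apply Set.Subset.antisymm
        · rintro y (hy | hy)
          · exact Set.mem_insert_of_mem _ hy
          · by_cases hyx : y = x
            · exact hyx ▸ Set.mem_insert _ _
            · exact Set.mem_insert_of_mem _ (hsub ⟨hy, hyx⟩)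
        · rintro y hy
          rcases Set.mem_insert_iff.1 hy with rfl | hy
          · exact Or.inr hx
          · exact Or.inl hy
      exact he ▸ hm
    · have hcard : (T \ {x}).ncard ≤ n := by
        have := Set.ncard_diff_singleton_lt_of_mem hx (Set.toFinite T)
        omega
      obtain ⟨t, ht, htS, hins⟩ := ih (T \ {x}) hxF hcard S hS hsub
      exact ⟨t, ht.1, htS, hins⟩

/-- A finite join-semilattice with a least element has separated equalizers if and only
if it can be represented as an antimatroid: there exist a finite set `X`, a learning
space `𝓕` on `X`, and a bijection `φ : L → 𝓕` with `φ (x ⊔ y) = φ x ∪ φ y`. -/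
theorem stmt19 {L : Type*} [SemilatticeSup L] [OrderBot L] [Fintype L] :
    SeparatedEqualizers L ↔
    ∃ (X : Type) (_ : Fintype X) (F : Set (Set X)) (φ : L → Set X),
      IsLearningSpaceOn X F ∧
      Function.Injective φ ∧
      Set.range φ = F ∧
      ∀ x y : L, φ (x ⊔ y) = φ x ∪ φ y := by
  classical
  constructor
  · -- hard direction: SE implies antimatroid representation via meet-irreducibles
    intro hSE
    letI instL : Lattice L :=
      { (inferInstance : SemilatticeSup L) with
        inf := fun a b => (Finset.univ.filter (fun z => z ≤ a ∧ z ≤ b)).sup id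
        inf_le_left := fun a b => Finset.sup_le fun z hz => ((Finset.mem_filter.1 hz).2).1
        inf_le_right := fun a b => Finset.sup_le fun z hz => ((Finset.mem_filter.1 hz).2).2
        le_inf := fun c a b h1 h2 =>
          Finset.le_sup (f := id) (Finset.mem_filter.2 ⟨Finset.mem_univ c, h1, h2⟩) }
    letI instT : OrderTop L :=
      { top := Finset.univ.sup id
        le_top := fun a => Finset.le_sup (f := id) (Finset.mem_univ a) }
    haveI : Fintype {m : L // Stmt19Mi m} := Fintype.ofFinite _
    let e := Fintype.equivFin {m : L // Stmt19Mi m}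
    set N := Fintype.card {m : L // Stmt19Mi m} with hN
    let ψ : Fin N → L := fun i => ((e.symm i : {m : L // Stmt19Mi m}) : L)
    have hψmi : ∀ i, Stmt19Mi (ψ i) := fun i => (e.symm i).2
    have hψinj : Function.Injective ψ := fun i j h => e.symm.injective (Subtype.ext h)
    have hψsurj : ∀ m : L, Stmt19Mi m → ∃ i, ψ i = m := fun m hm =>
      ⟨e ⟨m, hm⟩, by simp [ψ]⟩
    set φ : L → Set (Fin N) := fun x => {i | ¬ x ≤ ψ i} with hφ
    have hφsup : ∀ x y : L, φ (x ⊔ y) = φ x ∪ φ y := by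
      intro x y
      ext i
      simp only [hφ, Set.mem_setOf_eq, Set.mem_union, sup_le_iff]
      tauto
    have hφinj : Function.Injective φ := by
      intro x y h
      have hiff : ∀ m : L, Stmt19Mi m → (x ≤ m ↔ y ≤ m) := by
        intro m hm
        obtain ⟨i, rfl⟩ := hψsurj m hm
        have := Set.ext_iff.1 h i
        simp only [hφ, Set.mem_setOf_eq] at this
        tauto
      apply le_antisymm
      · by_contra hxy
        obtain ⟨m, hm, hym, hxm⟩ := stmt19_mi_sep (x := x) (z := y) hxy
        exact hxm ((hiff m hm).2 hym)
      · by_contra hyx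
        obtain ⟨m, hm, hxm, hym⟩ := stmt19_mi_sep (x := y) (z := x) hyx
        exact hym ((hiff m hm).1 hxm)
    refine ⟨Fin N, inferInstance, Set.range φ, φ, ⟨?_, ?_, ?_, ?_⟩, hφinj, rfl, hφsup⟩
    · refine ⟨⊥, ?_⟩
      ext i
      simp [hφ, bot_le]
    · apply Set.eq_univ_of_forall
      intro i
      refine ⟨φ ⊤, ⟨⊤, rfl⟩, ?_⟩
      simp only [hφ, Set.mem_setOf_eq]
      exact fun h => (hψmi i).1 (top_le_iff.1 h)
    · rintro S ⟨u, rfl⟩ hne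
      obtain ⟨i0, hi0⟩ := hne
      have hub : u ≠ ⊥ := fun h => hi0 (h ▸ bot_le)
      obtain ⟨v, M, hvu, hMi, hvM, huM, huniq⟩ := stmt19_exists_cover_mi hSE hub
      obtain ⟨iM, hiM⟩ := hψsurj M hMi
      refine ⟨iM, by simp only [hφ, Set.mem_setOf_eq, hiM]; exact huM, ⟨v, ?_⟩⟩
      ext j
      simp only [hφ, Set.mem_setOf_eq, Set.mem_diff, Set.mem_singleton_iff]
      constructor
      · intro h
        refine ⟨fun hu2 => h (hvu.lt.le.trans hu2), fun hji => ?_⟩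
        exact h (hji ▸ hiM ▸ hvM)
      · rintro ⟨h1, h2⟩ hv
        exact h2 (hψinj (by rw [hiM]; exact huniq (ψ j) (hψmi j) hv h1))
    · rintro S ⟨x, rfl⟩ T ⟨y, rfl⟩
      exact ⟨x ⊔ y, hφsup x y⟩
  · -- easy direction: antimatroid representation implies SE
    rintro ⟨X, hX, F, φ, hLS, hinj, hrange, hsup⟩
    intro x y hxy ⟨a, b, h1, h2, h3, h4⟩
    have hmono : ∀ p q : L, p ≤ q ↔ φ p ⊆ φ q := by
      intro p q
      constructor
      · intro h
        have : φ (p ⊔ q) = φ q := by rw [sup_eq_right.2 h]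
        rw [hsup] at this
        exact this ▸ Set.subset_union_left
      · intro h
        have : φ (p ⊔ q) = φ q := by
          rw [hsup]
          exact Set.union_eq_self_of_subset_left h
        exact sup_eq_right.1 (hinj this)
    have hST : φ x ⊆ φ y := (hmono x y).1 hxy
    have h1' : φ x ∪ φ a ≠ φ x ∪ φ b := by
      rw [← hsup, ← hsup]; exact fun e => h1 (hinj e)
    have h2' : φ y ∪ φ a = φ y ∪ φ b := by rw [← hsup, ← hsup, h2]
    have h3' : φ x ∪ φ a ≠ φ y ∪ φ a := by
      rw [← hsup, ← hsup]; exact fun e => h3 (hinj e)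
    have h4' : φ x ∪ φ b ≠ φ y ∪ φ b := by
      rw [← hsup, ← hsup]; exact fun e => h4 (hinj e)
    -- there is some element of φ y outside φ x
    have hSTne : φ x ≠ φ y := fun e => h3' (by rw [e])
    obtain ⟨w, hwT, hwS⟩ := Set.exists_of_ssubset (ssubset_of_subset_of_ne hST hSTne)
    -- in fact there are two distinct such elements
    have htwo : ∃ w', w' ∈ φ y ∧ w' ∉ φ x ∧ w' ≠ w := by
      by_contra hno
      push_neg at hno
      have hTsub : φ y ⊆ insert w (φ x) := by
        intro t ht
        by_cases hts : t ∈ φ x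
        · exact Set.mem_insert_of_mem _ hts
        · exact (hno t ht hts) ▸ Set.mem_insert _ _
      have ea : φ y ∪ φ a = insert w (φ x ∪ φ a) := by
        apply Set.Subset.antisymm
        · rintro t (ht | ht)
          · rcases Set.mem_insert_iff.1 (hTsub ht) with rfl | ht'
            · exact Set.mem_insert _ _
            · exact Set.mem_insert_of_mem _ (Or.inl ht')
          · exact Set.mem_insert_of_mem _ (Or.inr ht)
        · rintro t ht
          rcases Set.mem_insert_iff.1 ht with rfl | ht
          · exact Or.inl hwT
          · rcases ht with ht | ht
            · exact Or.inl (hST ht)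
            · exact Or.inr ht
      have eb : φ y ∪ φ b = insert w (φ x ∪ φ b) := by
        apply Set.Subset.antisymm
        · rintro t (ht | ht)
          · rcases Set.mem_insert_iff.1 (hTsub ht) with rfl | ht'
            · exact Set.mem_insert _ _
            · exact Set.mem_insert_of_mem _ (Or.inl ht')
          · exact Set.mem_insert_of_mem _ (Or.inr ht)
        · rintro t ht
          rcases Set.mem_insert_iff.1 ht with rfl | ht
          · exact Or.inl hwT
          · rcases ht with ht | ht
            · exact Or.inl (hST ht)
            · exact Or.inr ht
      have hwa : w ∉ φ x ∪ φ a := by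
        intro h
        exact h3' (by rw [ea, Set.insert_eq_of_mem h])
      have hwb : w ∉ φ x ∪ φ b := by
        intro h
        exact h4' (by rw [eb, Set.insert_eq_of_mem h])
      apply h1'
      ext t
      constructor
      · intro ht
        have : t ∈ insert w (φ x ∪ φ b) := by
          rw [← eb, ← h2', ea]
          exact Set.mem_insert_of_mem _ ht
        rcases Set.mem_insert_iff.1 this with rfl | ht'
        · exact absurd ht hwa
        · exact ht'
      · intro ht
        have : t ∈ insert w (φ x ∪ φ a) := by
          rw [← ea, h2', eb]
          exact Set.mem_insert_of_mem _ ht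
        rcases Set.mem_insert_iff.1 this with rfl | ht'
        · exact absurd ht hwb
        · exact ht'
    obtain ⟨w', hw'T, hw'S, hww⟩ := htwo
    haveI := hX
    have hTF : φ y ∈ F := hrange ▸ Set.mem_range_self y
    have hSF : φ x ∈ F := hrange ▸ Set.mem_range_self x
    obtain ⟨t, htT, htS, hins⟩ :=
      stmt19_aug hLS (φ y).ncard (φ y) hTF le_rfl (φ x) hSF (fun h => hwS (h hwT))
    have : insert t (φ x) ∈ Set.range φ := by rw [hrange]; exact hins
    obtain ⟨z, hz⟩ := this
    refine ⟨z, ?_, ?_⟩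
    · refine lt_of_le_of_ne ((hmono x z).2 (hz ▸ Set.subset_insert t (φ x))) ?_
      rintro rfl
      exact htS (hz.symm ▸ Set.mem_insert t (φ x))
    · have hzy : φ z ⊆ φ y := by
        rw [hz]
        exact Set.insert_subset htT hST
      refine lt_of_le_of_ne ((hmono z y).2 hzy) ?_
      rintro rfl
      -- then insert t (φ z) = φ z contains both w and w', one of which differs from t
      by_cases hwt : w = t
      · subst hwt
        exact hw'S (by
          have := hz ▸ hw'T
          rcases Set.mem_insert_iff.1 this with h | h
          · exact absurd h hww
          · exact h)
      · exact hwS (by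
          have := hz ▸ hwT
          rcases Set.mem_insert_iff.1 this with h | h
          · exact absurd h hwt
          · exact h)
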